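/- Let p be an odd prime and W a finite-dimensional 𝔽ₚ-vector space equipped with a bilinear alternating form b : W × W → 𝔽ₚ whose rank is not equal to 2. Then the degree-p homogeneous component S^p(W) of the symmetric algebra is spanned by the elements x^(p-1)·y with x, y ∈ W satisfying b(x,y) = 0. -/

import Mathlib

open MvPolynomial

section aux
open Finset
variable {p k : ℕ}

private noncomputable def LL (p k : ℕ) (v : Fin k → ZMod p) : MvPolynomial (Fin k) (ZMod p) :=
  ∑ i, C (v i) * X i

private lemma LL_add (v w : Fin k → ZMod p) : LL p k (v + w) = LL p k v + LL p k w := by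
  simp [LL, add_mul, Finset.sum_add_distrib]

private lemma LL_smul (c : ZMod p) (v : Fin k → ZMod p) : LL p k (c • v) = c • LL p k v := by
  simp [LL, Finset.smul_sum, smul_eq_C_mul, mul_assoc]

private lemma LL_single (i : Fin k) : LL p k (Pi.single i 1) = X i := by
  rw [LL, Finset.sum_eq_single i]
  · simp
  · intro j _ hj; simp [Pi.single_apply, hj]
  · simp

private lemma LL_isHomog (v : Fin k → ZMod p) : (LL p k v).IsHomogeneous 1 := by
  apply MvPolynomial.IsHomogeneous.sum
  intro i _
  simpa using (isHomogeneous_C (Fin k) (v i)).mul (isHomogeneous_X _ i)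

variable [Fact p.Prime]

private lemma sum_units_pow (e : ℕ) :
    ∑ t : (ZMod p)ˣ, ((t : ZMod p)) ^ e = if (p - 1) ∣ e then -1 else 0 := by
  classical
  have := FiniteField.sum_pow_units (ZMod p) e
  simp only [ZMod.card] at this
  simpa using this

private lemma sum_all_pow (e : ℕ) :
    ∑ t : ZMod p, t ^ e = if (p - 1) ∣ e ∧ e ≠ 0 then -1 else 0 := by
  classical
  by_cases he : e = 0
  · subst he
    simp [Finset.card_univ, ZMod.card, ZMod.natCast_self]
  · rw [if_congr (iff_of_eq (by simp [he] : ((p-1) ∣ e ∧ e ≠ 0) = ((p-1) ∣ e))) rfl rfl]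
    rw [← sum_units_pow (p := p) e]
    let φ : (ZMod p)ˣ ↪ ZMod p := ⟨fun x ↦ x, fun _ _ h => Units.ext h⟩
    have huniv : univ.map φ = univ \ {0} := by
      ext x
      simp only [mem_map, mem_univ, Function.Embedding.coeFn_mk, true_and, mem_sdiff,
        mem_singleton, φ]
      exact isUnit_iff_ne_zero
    calc ∑ x : ZMod p, x ^ e = ∑ x ∈ univ \ {(0 : ZMod p)}, x ^ e := by
          rw [← Finset.sum_sdiff (Finset.subset_univ {0}), Finset.sum_singleton, zero_pow he,
            add_zero]
      _ = ∑ x : (ZMod p)ˣ, (x : ZMod p) ^ e := by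
          rw [← huniv, Finset.sum_map]; rfl

end aux

section aux2
open Finset
variable {p k : ℕ}

private lemma not_dvd_aux {a m : ℕ} (h1 : 0 < m) (h2 : m < 2 * a) (h3 : m ≠ a) : ¬ a ∣ m := by
  rintro ⟨c, rfl⟩
  have : a * 2 ≤ a * c ∨ a * c = a * 1 ∨ a * c = a * 0 := by
    rcases Nat.lt_or_ge c 2 with h | h
    · interval_cases c
      · right; right; rfl
      · right; left; rfl
    · exact Or.inl (Nat.mul_le_mul_left a h)
  omega

variable [Fact p.Prime]

private lemma sum_units_pow' (e : ℕ) :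
    ∑ t : (ZMod p)ˣ, ((t : ZMod p)) ^ e = if (p - 1) ∣ e then -1 else 0 := by
  classical
  have := FiniteField.sum_pow_units (ZMod p) e
  simp only [ZMod.card] at this
  simpa using this

private lemma key_sum (hp3 : 3 ≤ p) (A B U V : MvPolynomial (Fin k) (ZMod p)) :
    ∑ t : (ZMod p)ˣ, (A + (t : ZMod p) • V) ^ (p - 1) * (B + ((t : ZMod p) ^ (p - 2)) • U)
      = -(A ^ (p - 1) * B) - V ^ (p - 1) * B + A ^ (p - 2) * V * U := by
  classical
  have hq : p - 1 + 1 = p := by omega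
  have expand : ∀ t : (ZMod p)ˣ,
      (A + (t : ZMod p) • V) ^ (p - 1) * (B + ((t : ZMod p) ^ (p - 2)) • U)
        = ∑ j ∈ Finset.range p,
            ((t : ZMod p) ^ (p - 1 - j) •
              (((p - 1).choose j : ZMod p) • (A ^ j * V ^ (p - 1 - j) * B))
            + (t : ZMod p) ^ (p - 1 - j + (p - 2)) •
              (((p - 1).choose j : ZMod p) • (A ^ j * V ^ (p - 1 - j) * U))) := by
    intro t
    rw [add_pow, hq, Finset.sum_mul]
    refine Finset.sum_congr rfl fun j hj => ?_
    simp only [smul_pow, smul_eq_C_mul, ← map_natCast (C : ZMod p →+* MvPolynomial (Fin k) (ZMod p)),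
      pow_add, map_mul, map_pow]
    ring
  rw [Finset.sum_congr rfl fun t _ => expand t, Finset.sum_comm]
  have swap : ∀ j ∈ Finset.range p,
      (∑ t : (ZMod p)ˣ,
        ((t : ZMod p) ^ (p - 1 - j) •
          (((p - 1).choose j : ZMod p) • (A ^ j * V ^ (p - 1 - j) * B))
        + (t : ZMod p) ^ (p - 1 - j + (p - 2)) •
          (((p - 1).choose j : ZMod p) • (A ^ j * V ^ (p - 1 - j) * U))))
      = ((if (p - 1) ∣ (p - 1 - j) then (-1 : ZMod p) else 0) •
          (((p - 1).choose j : ZMod p) • (A ^ j * V ^ (p - 1 - j) * B))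
        + (if (p - 1) ∣ (p - 1 - j + (p - 2)) then (-1 : ZMod p) else 0) •
          (((p - 1).choose j : ZMod p) • (A ^ j * V ^ (p - 1 - j) * U))) := by
    intro j _
    rw [Finset.sum_add_distrib, ← Finset.sum_smul, ← Finset.sum_smul, sum_units_pow',
      sum_units_pow']
  rw [Finset.sum_congr rfl swap]
  have hsub : ({0, p - 2, p - 1} : Finset ℕ) ⊆ Finset.range p := by
    intro j hj
    simp only [Finset.mem_insert, Finset.mem_singleton] at hj
    rw [Finset.mem_range]; omega
  rw [← Finset.sum_subset hsub]
  · have h0 : (0 : ℕ) ∉ ({p - 2, p - 1} : Finset ℕ) := by simp; omega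
    have h1 : (p - 2 : ℕ) ∉ ({p - 1} : Finset ℕ) := by simp; omega
    rw [Finset.sum_insert h0, Finset.sum_insert h1, Finset.sum_singleton]
    have e0a : (p - 1) ∣ (p - 1 - 0) := by simp
    have e0b : ¬ (p - 1) ∣ (p - 1 - 0 + (p - 2)) := not_dvd_aux (by omega) (by omega) (by omega)
    have e1a : ¬ (p - 1) ∣ (p - 1 - (p - 2)) := by
      intro h; have := Nat.le_of_dvd (by omega) h; omega
    have e1b : (p - 1) ∣ (p - 1 - (p - 2) + (p - 2)) := by
      have : p - 1 - (p - 2) + (p - 2) = p - 1 := by omega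
      rw [this]
    have e2a : (p - 1) ∣ (p - 1 - (p - 1)) := by simp
    have e2b : ¬ (p - 1) ∣ (p - 1 - (p - 1) + (p - 2)) := by
      intro h; have := Nat.le_of_dvd (by omega) h; omega
    rw [if_pos e0a, if_neg e0b, if_neg e1a, if_pos e1b, if_pos e2a, if_neg e2b]
    have c0 : ((p - 1).choose 0 : ZMod p) = 1 := by simp
    have c1 : ((p - 1).choose (p - 2) : ZMod p) = -1 := by
      have : (p - 1).choose (p - 2) = p - 1 := by
        have h : p - 2 = (p - 1) - 1 := by omega
        rw [h, Nat.choose_symm (by omega), Nat.choose_one_right]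
      rw [this, Nat.cast_sub (by omega), ZMod.natCast_self, Nat.cast_one, zero_sub]
    have c2 : ((p - 1).choose (p - 1) : ZMod p) = 1 := by simp
    rw [c0, c1, c2]
    have ev : p - 1 - (p - 2) = 1 := by omega
    have ev2 : p - 1 - (p - 1) = 0 := by omega
    rw [ev, ev2]
    simp only [Nat.sub_zero, pow_zero, pow_one, zero_smul, add_zero, zero_add, one_smul,
      smul_smul, neg_one_mul, neg_neg, one_mul, neg_smul]
    ring
  · intro j hj hj'
    simp only [Finset.mem_insert, Finset.mem_singleton, not_or] at hj'
    rw [Finset.mem_range] at hj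
    have d1 : ¬ (p - 1) ∣ (p - 1 - j) := not_dvd_aux (by omega) (by omega) (by omega)
    have d2 : ¬ (p - 1) ∣ (p - 1 - j + (p - 2)) := not_dvd_aux (by omega) (by omega) (by omega)
    rw [if_neg d1, if_neg d2, zero_smul, zero_smul, add_zero]

end aux2

section aux3
open Finset
variable {p k : ℕ}

private lemma skew (b : (Fin k → ZMod p) →ₗ[ZMod p] (Fin k → ZMod p) →ₗ[ZMod p] ZMod p)
    (halt : ∀ v, b v v = 0) (x y : Fin k → ZMod p) : b x y = -(b y x) := by
  have h := halt (x + y)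
  simp only [map_add, LinearMap.add_apply, halt x, halt y, zero_add, add_zero] at h
  linear_combination h

variable [Fact p.Prime]

private lemma exists_hyp
    (b : (Fin k → ZMod p) →ₗ[ZMod p] (Fin k → ZMod p) →ₗ[ZMod p] ZMod p)
    (halt : ∀ v, b v v = 0)
    (hrank : k - Module.finrank (ZMod p) (LinearMap.ker b) ≠ 2)
    {x y : Fin k → ZMod p} (hxy : b x y ≠ 0) :
    ∃ u v, b x u = 0 ∧ b y u = 0 ∧ b x v = 0 ∧ b y v = 0 ∧ b u v = 1 := by
  by_contra hcon
  push_neg at hcon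
  have hno : ∀ u v, b x u = 0 → b y u = 0 → b x v = 0 → b y v = 0 → b u v = 0 := by
    intro u v h1 h2 h3 h4
    by_contra hbe
    refine hcon u ((b u v)⁻¹ • v) h1 h2 ?_ ?_ ?_
    · simp [h3]
    · simp [h4]
    · simp [smul_eq_mul, inv_mul_cancel₀ hbe]
  set c := b x y with hc
  set φ := LinearMap.prod (b x) (b y) with hφ
  have hker : LinearMap.ker b = LinearMap.ker φ := by
    ext u
    simp only [LinearMap.mem_ker, hφ, LinearMap.prod_apply, Function.prod, Prod.mk_eq_zero]
    constructor
    · intro hu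
      constructor
      · rw [skew b halt x u, show b u x = 0 from by rw [hu]; rfl, neg_zero]
      · rw [skew b halt y u, show b u y = 0 from by rw [hu]; rfl, neg_zero]
    · rintro ⟨h1, h2⟩
      refine LinearMap.ext fun w => ?_
      set w' := w - (c⁻¹ * b x w) • y + (c⁻¹ * b y w) • x with hw'
      have hxw' : b x w' = 0 := by
        simp only [hw', map_add, map_sub, map_smul, smul_eq_mul, halt x]
        field_simp
        rw [← hc]; ring
      have hyw' : b y w' = 0 := by
        simp only [hw', map_add, map_sub, map_smul, smul_eq_mul, halt y,
          show b y x = -c from by rw [skew b halt y x]]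
        field_simp
        ring
      have hw : w = w' + (c⁻¹ * b x w) • y - (c⁻¹ * b y w) • x := by
        rw [hw']; abel
      have huy : b u y = 0 := by rw [skew b halt u y, h2, neg_zero]
      have hux : b u x = 0 := by rw [skew b halt u x, h1, neg_zero]
      have := hno u w' h1 h2 hxw' hyw'
      rw [LinearMap.zero_apply, hw]

      simp [map_add, map_sub, map_smul, smul_eq_mul, this, huy, hux]
  have hsurj : Function.Surjective φ := by
    rintro ⟨s, r⟩
    refine ⟨(s * c⁻¹) • y - (r * c⁻¹) • x, ?_⟩
    have hyx : b y x = -c := by rw [skew b halt y x]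
    simp only [hφ, LinearMap.prod_apply, Function.prod, map_sub, map_smul, smul_eq_mul, halt x, halt y,
      hyx, ← hc, Prod.smul_mk, Prod.mk_sub_mk, Prod.mk.injEq]
    have : c ≠ 0 := hxy
    constructor <;> field_simp <;> ring
  have hrange : LinearMap.range φ = ⊤ := LinearMap.range_eq_top.mpr hsurj
  have hfr := LinearMap.finrank_range_add_finrank_ker φ
  rw [hrange, finrank_top, Module.finrank_prod, Module.finrank_self,
    Module.finrank_pi] at hfr
  simp only [Fintype.card_fin] at hfr
  rw [hker] at hrank
  omega

end aux3

section lemM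
open Finset
variable {p k : ℕ} [Fact p.Prime]

private lemma lemM (hodd : Odd p)
    (b : (Fin k → ZMod p) →ₗ[ZMod p] (Fin k → ZMod p) →ₗ[ZMod p] ZMod p)
    (halt : ∀ v, b v v = 0)
    (hrank : k - Module.finrank (ZMod p) (LinearMap.ker b) ≠ 2)
    (x y : Fin k → ZMod p) :
    (LL p k x) ^ (p - 1) * LL p k y ∈
      Submodule.span (ZMod p)
        {f : MvPolynomial (Fin k) (ZMod p) |
          ∃ v w : Fin k → ZMod p, b v w = 0 ∧ f = (LL p k v) ^ (p - 1) * (LL p k w)} := by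
  classical
  set Sp := Submodule.span (ZMod p)
        {f : MvPolynomial (Fin k) (ZMod p) |
          ∃ v w : Fin k → ZMod p, b v w = 0 ∧ f = (LL p k v) ^ (p - 1) * (LL p k w)} with hSp
  by_cases h0 : b x y = 0
  · exact Submodule.subset_span ⟨x, y, h0, rfl⟩
  have hp3 : 3 ≤ p := by
    have h2 := (Fact.out : p.Prime).two_le
    rcases hodd with ⟨m, hm⟩
    omega
  obtain ⟨y', hy'⟩ : ∃ y', y' = (b x y)⁻¹ • y := ⟨_, rfl⟩
  have hxy' : b x y' = 1 := by
    rw [hy', map_smul, smul_eq_mul, inv_mul_cancel₀ h0]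
  obtain ⟨u, v, hxu, hyu, hxv, hyv, huv⟩ :=
    exists_hyp b halt hrank (x := x) (y := y') (by rw [hxy']; exact one_ne_zero)
  have hvu : b v u = -1 := by rw [skew b halt v u, huv]
  have huy' : b u y' = 0 := by rw [skew b halt u y', hyu, neg_zero]
  have hvy' : b v y' = 0 := by rw [skew b halt v y', hyv, neg_zero]
  have tpow : ∀ t : (ZMod p)ˣ, (t : ZMod p) * (t : ZMod p) ^ (p - 2) = 1 := by
    intro t
    rw [← pow_succ']
    have : p - 2 + 1 = p - 1 := by omega
    rw [this]
    exact ZMod.pow_card_sub_one_eq_one (Units.ne_zero t)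
  have mem1 : (∑ t : (ZMod p)ˣ,
      (LL p k x + (t : ZMod p) • LL p k v) ^ (p - 1)
        * (LL p k y' + ((t : ZMod p) ^ (p - 2)) • LL p k u)) ∈ Sp := by
    refine Submodule.sum_mem _ fun t _ => Submodule.subset_span ?_
    refine ⟨x + (t : ZMod p) • v, y' + ((t : ZMod p) ^ (p - 2)) • u, ?_, ?_⟩
    · simp only [map_add, map_smul, LinearMap.add_apply, LinearMap.smul_apply, smul_eq_mul,
        hxy', hxu, hvy', hvu, mul_zero, zero_add, add_zero, mul_neg, mul_one]
      linear_combination -tpow t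
    · rw [LL_add, LL_add, LL_smul, LL_smul]
  have mem2 : (∑ t : (ZMod p)ˣ,
      (LL p k x + (t : ZMod p) • LL p k u) ^ (p - 1)
        * (LL p k y' + ((t : ZMod p) ^ (p - 2)) • (-LL p k v))) ∈ Sp := by
    refine Submodule.sum_mem _ fun t _ => Submodule.subset_span ?_
    refine ⟨x + (t : ZMod p) • u, y' + (-((t : ZMod p) ^ (p - 2))) • v, ?_, ?_⟩
    · simp only [map_add, map_smul, LinearMap.add_apply, LinearMap.smul_apply, smul_eq_mul,
        hxy', hxv, huy', huv, mul_zero, zero_add, add_zero, mul_neg, mul_one, neg_mul, neg_neg]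
      linear_combination -tpow t
    · rw [LL_add, LL_add, LL_smul, LL_smul, neg_smul, ← smul_neg]
  have mem3 : LL p k v ^ (p - 1) * LL p k y' ∈ Sp := Submodule.subset_span ⟨v, y', hvy', rfl⟩
  have mem4 : LL p k u ^ (p - 1) * LL p k y' ∈ Sp := Submodule.subset_span ⟨u, y', huy', rfl⟩
  have hsum : (∑ t : (ZMod p)ˣ,
      (LL p k x + (t : ZMod p) • LL p k v) ^ (p - 1)
        * (LL p k y' + ((t : ZMod p) ^ (p - 2)) • LL p k u))
      + (∑ t : (ZMod p)ˣ,
      (LL p k x + (t : ZMod p) • LL p k u) ^ (p - 1)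
        * (LL p k y' + ((t : ZMod p) ^ (p - 2)) • (-LL p k v)))
      + LL p k v ^ (p - 1) * LL p k y' + LL p k u ^ (p - 1) * LL p k y'
      = (-2 : ZMod p) • (LL p k x ^ (p - 1) * LL p k y') := by
    rw [key_sum hp3 (LL p k x) (LL p k y') (LL p k u) (LL p k v),
      key_sum hp3 (LL p k x) (LL p k y') (-LL p k v) (LL p k u)]
    rw [smul_eq_C_mul, map_neg, map_ofNat]
    ring
  have h2ne : (-2 : ZMod p) ≠ 0 := by
    intro h
    have h2 : ((2 : ℕ) : ZMod p) = 0 := by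
      rw [Nat.cast_ofNat]
      linear_combination -h
    rw [ZMod.natCast_eq_zero_iff] at h2
    have := Nat.le_of_dvd (by omega) h2
    omega
  have hmemB : LL p k x ^ (p - 1) * LL p k y' ∈ Sp := by
    have heq : LL p k x ^ (p - 1) * LL p k y'
        = (-2 : ZMod p)⁻¹ • ((-2 : ZMod p) • (LL p k x ^ (p - 1) * LL p k y')) := by
      rw [smul_smul, inv_mul_cancel₀ h2ne, one_smul]
    rw [heq, ← hsum]
    exact Submodule.smul_mem _ _
      (add_mem (add_mem (add_mem mem1 mem2) mem3) mem4)
  have hyy : LL p k y = (b x y) • LL p k y' := by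
    rw [hy', LL_smul, smul_smul, mul_inv_cancel₀ h0, one_smul]
  rw [hyy, mul_smul_comm]
  exact Submodule.smul_mem _ _ hmemB

end lemM

section lemP
open Finset
variable {p k : ℕ} [Fact p.Prime]

private lemma multinomial_ne_zero (β : Fin k → ℕ) (hβ : ∑ i, β i = p - 1) :
    (Nat.multinomial Finset.univ β : ZMod p) ≠ 0 := by
  intro h
  rw [ZMod.natCast_eq_zero_iff] at h
  have hspec := Nat.multinomial_spec Finset.univ β
  rw [hβ] at hspec
  have hdvd : p ∣ Nat.factorial (p - 1) := by
    rw [← hspec]; exact Dvd.dvd.mul_left h _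
  have h1 := (Nat.Prime.dvd_factorial (Fact.out : p.Prime)).mp hdvd
  have h2 := (Fact.out : p.Prime).two_le
  omega

private lemma pow_span (β : Fin k → ℕ) (hβ : ∑ i, β i = p - 1) :
    (∏ i, (X i : MvPolynomial (Fin k) (ZMod p)) ^ β i) ∈
      Submodule.span (ZMod p)
        {f : MvPolynomial (Fin k) (ZMod p) |
          ∃ t : Fin k → ZMod p, f = (LL p k t) ^ (p - 1)} := by
  classical
  have hp2 : 2 ≤ p := (Fact.out : p.Prime).two_le
  have hβle : ∀ i, β i ≤ p - 1 := fun i =>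
    hβ ▸ Finset.single_le_sum (f := fun i => β i) (fun _ _ => Nat.zero_le _) (Finset.mem_univ i)
  have expand : ∀ t : Fin k → ZMod p, (LL p k t) ^ (p - 1)
      = ∑ α ∈ Finset.piAntidiag Finset.univ (p - 1),
          ((Nat.multinomial Finset.univ α : ZMod p) * ∏ i, (t i) ^ (α i)) •
            ∏ i, (X i : MvPolynomial (Fin k) (ZMod p)) ^ (α i) := by
    intro t
    rw [LL, Finset.sum_pow_eq_sum_piAntidiag]
    refine Finset.sum_congr rfl fun α hα => ?_
    simp only [mul_pow, Finset.prod_mul_distrib, smul_eq_C_mul, map_mul, map_prod, map_pow,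
      ← map_natCast (C : ZMod p →+* MvPolynomial (Fin k) (ZMod p))]
    ring
  have key : ∑ t : Fin k → ZMod p, (∏ i, (t i) ^ (p - 1 - β i)) • (LL p k t) ^ (p - 1)
      = ((-1 : ZMod p) ^ k * (Nat.multinomial Finset.univ β : ZMod p)) •
          ∏ i, (X i : MvPolynomial (Fin k) (ZMod p)) ^ β i := by
    calc ∑ t : Fin k → ZMod p, (∏ i, (t i) ^ (p - 1 - β i)) • (LL p k t) ^ (p - 1)
        = ∑ t : Fin k → ZMod p, ∑ α ∈ Finset.piAntidiag Finset.univ (p - 1),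
            ((∏ i, (t i) ^ (p - 1 - β i)) *
              ((Nat.multinomial Finset.univ α : ZMod p) * ∏ i, (t i) ^ (α i))) •
              ∏ i, (X i : MvPolynomial (Fin k) (ZMod p)) ^ (α i) := by
          refine Finset.sum_congr rfl fun t _ => ?_
          rw [expand t, Finset.smul_sum]
          exact Finset.sum_congr rfl fun α _ => by rw [smul_smul]
      _ = ∑ α ∈ Finset.piAntidiag Finset.univ (p - 1),
            ((Nat.multinomial Finset.univ α : ZMod p) *
              ∏ i, (∑ c : ZMod p, c ^ (p - 1 - β i + α i))) •
              ∏ i, (X i : MvPolynomial (Fin k) (ZMod p)) ^ (α i) := by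
          rw [Finset.sum_comm]
          refine Finset.sum_congr rfl fun α _ => ?_
          rw [← Finset.sum_smul]
          congr 1
          have hterm : ∀ t : Fin k → ZMod p,
              (∏ i, (t i) ^ (p - 1 - β i)) *
                ((Nat.multinomial Finset.univ α : ZMod p) * ∏ i, (t i) ^ (α i))
              = (Nat.multinomial Finset.univ α : ZMod p) *
                  ∏ i, (t i) ^ (p - 1 - β i + α i) := by
            intro t
            rw [mul_left_comm, ← Finset.prod_mul_distrib]
            simp_rw [← pow_add]
          rw [Finset.sum_congr rfl fun t _ => hterm t, ← Finset.mul_sum]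
          congr 1
          rw [Finset.prod_univ_sum, Fintype.piFinset_univ]
      _ = ((Nat.multinomial Finset.univ β : ZMod p) *
              ∏ i, (∑ c : ZMod p, c ^ (p - 1 - β i + β i))) •
              ∏ i, (X i : MvPolynomial (Fin k) (ZMod p)) ^ (β i) := by
          refine Finset.sum_eq_single β (fun α hα hne => ?_) (fun hmem => ?_)
          · rw [Finset.mem_piAntidiag] at hα
            have hprod : (∏ i, (∑ c : ZMod p, c ^ (p - 1 - β i + α i))) = 0 := by
              by_contra hpz
              have hpz' : ∀ i ∈ Finset.univ, (∑ c : ZMod p, c ^ (p - 1 - β i + α i)) ≠ 0 :=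
                Finset.prod_ne_zero_iff.mp hpz
              have hdv : ∀ i, (p - 1) ∣ (p - 1 - β i + α i) ∧ (p - 1 - β i + α i) ≠ 0 := by
                intro i
                have := hpz' i (Finset.mem_univ i)
                rw [sum_all_pow] at this
                by_contra hcond
                rw [if_neg hcond] at this
                exact this rfl
              have hge : ∀ i, p - 1 ≤ p - 1 - β i + α i := fun i =>
                Nat.le_of_dvd (Nat.pos_of_ne_zero (hdv i).2) (hdv i).1
              have hsum_parts : (∑ i, (p - 1 - β i)) + (p - 1) = k * (p - 1) := by
                have h1 : ∑ i, ((p - 1 - β i) + β i) = ∑ _i : Fin k, (p - 1) :=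
                  Finset.sum_congr rfl fun i _ => by have := hβle i; omega
                rw [Finset.sum_add_distrib, hβ] at h1
                rw [Finset.sum_const, Finset.card_univ, Fintype.card_fin, smul_eq_mul] at h1
                omega
              have hsum_e : ∑ i, (p - 1 - β i + α i) = k * (p - 1) := by
                rw [Finset.sum_add_distrib, hα.1]
                exact hsum_parts
              have hall : ∀ i, p - 1 - β i + α i = p - 1 := by
                by_contra hne2
                push_neg at hne2
                obtain ⟨i0, hi0⟩ := hne2
                have hlt : ∑ _i : Fin k, (p - 1) < ∑ i, (p - 1 - β i + α i) :=
                  Finset.sum_lt_sum (fun i _ => hge i)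
                    ⟨i0, Finset.mem_univ i0, lt_of_le_of_ne (hge i0) (Ne.symm hi0)⟩
                rw [hsum_e, Finset.sum_const, Finset.card_univ, Fintype.card_fin,
                  smul_eq_mul] at hlt
                omega
              exact hne (funext fun i => by have := hall i; have := hβle i; omega)
            rw [hprod, mul_zero, zero_smul]
          · exact absurd (Finset.mem_piAntidiag.mpr ⟨hβ, fun i _ => Finset.mem_univ i⟩) hmem
      _ = ((-1 : ZMod p) ^ k * (Nat.multinomial Finset.univ β : ZMod p)) •
              ∏ i, (X i : MvPolynomial (Fin k) (ZMod p)) ^ β i := by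
          congr 1
          have hval : ∀ i : Fin k, (∑ c : ZMod p, c ^ (p - 1 - β i + β i)) = -1 := by
            intro i
            rw [sum_all_pow, if_pos]
            constructor
            · have := hβle i; have : p - 1 - β i + β i = p - 1 := by omega
              rw [this]
            · have := hβle i; omega
          rw [Finset.prod_congr rfl fun i _ => hval i, Finset.prod_const, Finset.card_univ,
            Fintype.card_fin]
          ring
  have hcne : ((-1 : ZMod p) ^ k * (Nat.multinomial Finset.univ β : ZMod p)) ≠ 0 :=
    mul_ne_zero (pow_ne_zero _ (neg_ne_zero.mpr one_ne_zero)) (multinomial_ne_zero β hβ)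
  have : (∏ i, (X i : MvPolynomial (Fin k) (ZMod p)) ^ β i)
      = ((-1 : ZMod p) ^ k * (Nat.multinomial Finset.univ β : ZMod p))⁻¹ •
        ∑ t : Fin k → ZMod p, (∏ i, (t i) ^ (p - 1 - β i)) • (LL p k t) ^ (p - 1) := by
    rw [key, smul_smul, inv_mul_cancel₀ hcne, one_smul]
  rw [this]
  exact Submodule.smul_mem _ _ (Submodule.sum_mem _ fun t _ =>
    Submodule.smul_mem _ _ (Submodule.subset_span ⟨t, rfl⟩))

end lemP


/-- Let `p` be an odd prime and `W` a finite-dimensional `𝔽_p`-vector space (realized as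
`𝔽_p^k`, embedded as the degree-one part of the symmetric algebra `𝔽_p[X₁,…,X_k]` via
`w ↦ ∑ i, wᵢ Xᵢ`) with a bilinear alternating form `b` of rank `≠ 2`. Then `S^p(W)` is
spanned by the elements `x^(p-1)·y` with `b(x,y) = 0`. -/
theorem stmt3 (p : ℕ) [Fact p.Prime] (hodd : Odd p) (k : ℕ)
    (b : (Fin k → ZMod p) →ₗ[ZMod p] (Fin k → ZMod p) →ₗ[ZMod p] ZMod p)
    (halt : ∀ v, b v v = 0)
    (hrank : k - Module.finrank (ZMod p) (LinearMap.ker b) ≠ 2) :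
    (homogeneousSubmodule (Fin k) (ZMod p) p : Submodule (ZMod p) _) =
      Submodule.span (ZMod p)
        {f : MvPolynomial (Fin k) (ZMod p) |
          ∃ v w : Fin k → ZMod p, b v w = 0 ∧
            f = (∑ i, C (v i) * X i) ^ (p - 1) * (∑ i, C (w i) * X i)} := by
  classical
  have hp2 : 2 ≤ p := (Fact.out : p.Prime).two_le
  have hseteq : {f : MvPolynomial (Fin k) (ZMod p) |
        ∃ v w : Fin k → ZMod p, b v w = 0 ∧
          f = (∑ i, C (v i) * X i) ^ (p - 1) * (∑ i, C (w i) * X i)}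
      = {f : MvPolynomial (Fin k) (ZMod p) |
        ∃ v w : Fin k → ZMod p, b v w = 0 ∧ f = (LL p k v) ^ (p - 1) * (LL p k w)} := rfl
  rw [hseteq]
  apply le_antisymm
  · intro f hf
    rw [mem_homogeneousSubmodule] at hf
    rw [← support_sum_monomial_coeff f]
    refine Submodule.sum_mem _ fun d hd => ?_
    have hdsum : (d.sum fun _ e => e) = p := by
      have := hf (MvPolynomial.mem_support_iff.mp hd)
      rw [Finsupp.weight_apply] at this
      simpa [Finsupp.sum, smul_eq_mul] using this
    have hmono : monomial d (coeff d f) = (coeff d f) • monomial d (1 : ZMod p) := by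
      rw [MvPolynomial.smul_monomial, smul_eq_mul, mul_one]
    rw [hmono]
    refine Submodule.smul_mem _ _ ?_
    obtain ⟨i, hi⟩ : ∃ i, d i ≠ 0 := by
      by_contra hno
      push_neg at hno
      have hd0 : d = 0 := Finsupp.ext fun j => hno j
      rw [hd0, Finsupp.sum_zero_index] at hdsum
      omega
    have hle : Finsupp.single i 1 ≤ d := by
      rw [Finsupp.single_le_iff]
      omega
    have hde : (d - Finsupp.single i 1) + Finsupp.single i 1 = d := tsub_add_cancel_of_le hle
    set e := d - Finsupp.single i 1 with hedef
    have hesum : (e.sum fun _ x => x) = p - 1 := by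
      have h1 : ((e + Finsupp.single i 1).sum fun _ x => x)
          = (e.sum fun _ x => x) + ((Finsupp.single i 1).sum fun _ x => x) :=
        Finsupp.sum_add_index' (fun _ => rfl) (fun _ _ _ => rfl)
      rw [hde, hdsum] at h1
      rw [Finsupp.sum_single_index rfl] at h1
      omega
    have hesum' : ∑ j, e j = p - 1 := by
      rw [← hesum, Finsupp.sum_fintype]
      exact fun _ => rfl
    have hmono2 : monomial d (1 : ZMod p) = (∏ j, (X j : MvPolynomial (Fin k) (ZMod p)) ^ e j) * X i := by
      have hXi : (X i : MvPolynomial (Fin k) (ZMod p)) = monomial (Finsupp.single i 1) 1 := rfl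
      have hprod : (∏ j, (X j : MvPolynomial (Fin k) (ZMod p)) ^ e j) = monomial e 1 := by
        rw [monomial_eq, C_1, one_mul]
        exact (Finsupp.prod_fintype _ _ fun j => pow_zero _).symm
      rw [hprod, hXi, monomial_mul, one_mul, hde]
    rw [hmono2]
    have hmem := pow_span (p := p) (k := k) (fun j => e j) hesum'
    have hmap := Submodule.mem_map_of_mem
      (f := LinearMap.mulRight (ZMod p) (X i : MvPolynomial (Fin k) (ZMod p))) hmem
    rw [Submodule.map_span] at hmap
    have hXspan : Submodule.span (ZMod p)
        ((LinearMap.mulRight (ZMod p) (X i : MvPolynomial (Fin k) (ZMod p))) ''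
          {f : MvPolynomial (Fin k) (ZMod p) | ∃ t : Fin k → ZMod p, f = (LL p k t) ^ (p - 1)})
        ≤ Submodule.span (ZMod p)
          {f : MvPolynomial (Fin k) (ZMod p) |
            ∃ v w : Fin k → ZMod p, b v w = 0 ∧ f = (LL p k v) ^ (p - 1) * (LL p k w)} := by
      rw [Submodule.span_le]
      rintro g ⟨f0, ⟨t, rfl⟩, rfl⟩
      simp only [LinearMap.mulRight_apply]
      rw [← LL_single i]
      exact lemM hodd b halt hrank t (Pi.single i 1)
    exact hXspan (by simpa using hmap)
  · rw [Submodule.span_le]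
    rintro f ⟨v, w, hbvw, rfl⟩
    rw [SetLike.mem_coe, mem_homogeneousSubmodule]
    have h2 := ((LL_isHomog v).pow (p - 1)).mul (LL_isHomog w)
    have h3 : 1 * (p - 1) + 1 = p := by omega
    rw [h3] at h2
    exact h2
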